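/- Let A be a closure space equipped with a preorder ≤ such that ↑c_A(↑S) ⊆ c_A(S) for all S ⊆ A (a modular closure space), let M be a closure space equipped with a partial order such that c_M({z}) = ↑z for every z ∈ M (a normalised modular closure space), let B be an ordered set, let d : A → M be monotone and continuous (i.e. d(c_A(S)) ⊆ c_M(d(S)) for all S ⊆ A), and let J ⊆ A × B be a modular relation (x′ ≤ x, (x,y) ∈ J and y ≤ y′ imply (x′,y′) ∈ J). Write J⁻¹(y) = {x ∈ A | (x,y) ∈ J} and suppose that for every y ∈ B the supremum sup d(J⁻¹(y)) exists in M. If for every y ∈ B the set d(J⁻¹(y)) ⊆ M is compact and up-directed, then for every y ∈ B the set d(J⁻¹(y)) has a greatest element; that is, the left Kan extension l : B → M, l(y) = sup d(J⁻¹(y)), satisfies the Beck–Chevalley condition (its defining suprema are attained as maxima). -/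

import Mathlib

universe u v w

/-- A subset `K` of a closure space `(M, cM)` is compact if every family of
closed subsets whose finite subfamilies all meet `K` has intersection meeting
`K`. -/
def ClsCompact {M : Type v} (cM : Set M → Set M) (K : Set M) : Prop :=
  ∀ {ι : Type v} (Vf : ι → Set M), (∀ i, cM (Vf i) ⊆ Vf i) →
    (∀ F : Finset ι, (K ∩ ⋂ i ∈ F, Vf i).Nonempty) →
    (K ∩ ⋂ i, Vf i).Nonempty

/-- **Theorem 8.1** of the paper (a generalised extreme value theorem): let `A`
be a modular closure space, `M` a normalised modular closure space (all
closures of singletons are principal upsets), `B` an ordered set, `d : A → M`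
monotone continuous, and `J ⊆ A × B` a modular relation such that each
`sup d(J⁻¹ y)` exists. If every `d(J⁻¹ y)` is compact and up-directed, then
every `d(J⁻¹ y)` has a greatest element; that is, the left Kan extension
`l y = sup d(J⁻¹ y)` satisfies the Beck–Chevalley condition. -/
theorem extreme_value_theorem_closure_spaces
    {A : Type u} {M : Type v} {B : Type w}
    [Preorder A] [PartialOrder M] [Preorder B]
    (cA : Set A → Set A) (cM : Set M → Set M)
    (hA₁ : ∀ S, S ⊆ cA S) (hA₂ : ∀ S T : Set A, S ⊆ T → cA S ⊆ cA T)
    (hA₃ : ∀ S, cA (cA S) ⊆ cA S)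
    (hM₁ : ∀ S, S ⊆ cM S) (hM₂ : ∀ S T : Set M, S ⊆ T → cM S ⊆ cM T)
    (hM₃ : ∀ S, cM (cM S) ⊆ cM S)
    (hAmod : ∀ S : Set A,
      {x | ∃ s ∈ cA {a | ∃ s' ∈ S, s' ≤ a}, s ≤ x} ⊆ cA S)
    (hMnorm : ∀ z : M, cM {z} = Set.Ici z)
    (d : A → M) (hdmono : Monotone d)
    (hdcont : ∀ S : Set A, d '' cA S ⊆ cM (d '' S))
    (J : A → B → Prop)
    (hJmod : ∀ (x' x : A) (y y' : B), x' ≤ x → J x y → y ≤ y' → J x' y')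
    (hsup : ∀ y : B, ∃ m : M, IsLUB (d '' {x | J x y}) m)
    (hcpt : ∀ y : B, ClsCompact cM (d '' {x | J x y}))
    (hdir : ∀ y : B, (d '' {x | J x y}).Nonempty ∧
      ∀ u ∈ d '' {x | J x y}, ∀ v ∈ d '' {x | J x y},
        ∃ w ∈ d '' {x | J x y}, u ≤ w ∧ v ≤ w) :
    ∀ y : B, ∃ m ∈ d '' {x | J x y}, ∀ z ∈ d '' {x | J x y}, z ≤ m := by
  intro y
  set K := d '' {x | J x y} with hK
  obtain ⟨hne, hdir'⟩ := hdir y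
  have hfin : ∀ F : Finset K, ∃ m ∈ K, ∀ k ∈ F, (k : M) ≤ m := by
    classical
    intro F
    induction F using Finset.induction_on with
    | empty => obtain ⟨m, hm⟩ := hne; exact ⟨m, hm, by simp⟩
    | insert _ _ hk ih =>
      rename_i a F'
      obtain ⟨m, hmK, hm⟩ := ih
      obtain ⟨w, hwK, hw1, hw2⟩ := hdir' (a : M) a.2 m hmK
      refine ⟨w, hwK, ?_⟩
      intro k hkF
      rcases Finset.mem_insert.mp hkF with h | h
      · exact h ▸ hw1
      · exact (hm k h).trans hw2
  have hclosed : ∀ k : K, cM (Set.Ici (k : M)) ⊆ Set.Ici (k : M) := by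
    intro k
    rw [← hMnorm]
    exact (hM₃ _).trans (le_of_eq (by rw [hMnorm]) : cM {(k : M)} ⊆ Set.Ici _) |>.trans
      (le_of_eq (hMnorm _).symm)
  have := hcpt y (fun k : K => Set.Ici (k : M)) hclosed ?_
  · obtain ⟨m, hmK, hm⟩ := this
    refine ⟨m, hmK, ?_⟩
    intro z hz
    have := Set.mem_iInter.mp hm ⟨z, hz⟩
    exact this
  · intro F
    obtain ⟨m, hmK, hm⟩ := hfin F
    refine ⟨m, hmK, ?_⟩
    simp only [Set.mem_iInter]
    intro k hk
    exact hm k hk
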